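/- Let S be a finite set, a ∈ S, and x ∈ S^T a sequence in which a occurs at least twice. Let σ be any permutation of the a-blocks of x and let σ·x denote the block-permuted sequence. Then σ·x ∈ S^T has the same length as x, the same first element (x_1), the same last element (x_T), the same number of occurrences of a, and the same transition counts: n_{ij}(σ·x) = n_{ij}(x) for all i, j ∈ S. -/

import Mathlib

/-- The number of transitions from `i` to `j` in a finite sequence (list) `x`:
`n_{ij}(x) = Σ_{t=1}^{T-1} 1[x_t = i, x_{t+1} = j]`. -/
def transCountL {S : Type*} [DecidableEq S] (x : List S) (i j : S) : ℕ :=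
  (x.zip x.tail).count (i, j)

namespace BlockPermAux

variable {S : Type*}

/-- The list of consecutive pairs of `x`. -/
def pairs (x : List S) : List (S × S) := x.zip x.tail

lemma pairs_append {u v : List S} {l h : S}
    (hl : u.getLast? = some l) (hh : v.head? = some h) :
    pairs (u ++ v) = pairs u ++ (l, h) :: pairs v := by
  induction u with
  | nil => simp at hl
  | cons x t ih =>
    cases t with
    | nil =>
      simp only [List.getLast?_singleton, Option.some.injEq] at hl
      cases v with
      | nil => simp at hh
      | cons y v' =>
        simp only [List.head?_cons, Option.some.injEq] at hh
        subst hl hh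
        rfl
    | cons y t' =>
      have hl' : (y :: t').getLast? = some l := by
        rwa [List.getLast?_cons_cons] at hl
      have : pairs ((x :: y :: t') ++ v) = (x, y) :: pairs ((y :: t') ++ v) := rfl
      rw [this, ih hl']
      rfl

lemma head?_flatten_append {L : List (List S)} {s : List S} {a : S}
    (hL : ∀ B ∈ L, B.head? = some a) (hs : s.head? = some a) :
    (L.flatten ++ s).head? = some a := by
  induction L with
  | nil => simpa using hs
  | cons B L' ih =>
    have hB : B.head? = some a := hL B (by simp)
    cases B with
    | nil => simpa using ih (fun C hC => hL C (by simp [hC]))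
    | cons b B' =>
      simp only [List.head?_cons, Option.some.injEq] at hB
      simp [hB]

lemma getLast?_eq_some_getLastD {l : List S} (h : l ≠ []) (c : S) :
    l.getLast? = some (l.getLastD c) := by
  cases hl : l.getLast? with
  | none => exact absurd (List.getLast?_eq_none_iff.1 hl) h
  | some y => simp [List.getLastD_eq_getLast?, hl]

lemma pairs_flatten_append {a : S} {s : List S} (hs : s.head? = some a) :
    ∀ {L : List (List S)}, (∀ B ∈ L, B ≠ []) → (∀ B ∈ L, B.head? = some a) →
    pairs (L.flatten ++ s) =
      (L.map (fun B => pairs B ++ [(B.getLastD a, a)])).flatten ++ pairs s := by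
  intro L
  induction L with
  | nil => simp
  | cons B L' ih =>
    intro h1 h2
    have hB : B ≠ [] := h1 B (by simp)
    have hlast : B.getLast? = some (B.getLastD a) := getLast?_eq_some_getLastD hB a
    have hhead : (L'.flatten ++ s).head? = some a :=
      head?_flatten_append (fun C hC => h2 C (by simp [hC])) hs
    have : (B :: L').flatten ++ s = B ++ (L'.flatten ++ s) := by simp
    rw [this, pairs_append hlast hhead,
      ih (fun C hC => h1 C (by simp [hC])) (fun C hC => h2 C (by simp [hC]))]
    simp

lemma flatten_perm {l₁ l₂ : List (List S)} (h : l₁.Perm l₂) :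
    l₁.flatten.Perm l₂.flatten := by
  induction h with
  | nil => rfl
  | cons x _ ih => simpa using ih.append_left x
  | swap x y l =>
    simp only [List.flatten_cons, ← List.append_assoc]
    exact (List.perm_append_comm.append_right _)
  | trans _ _ ih1 ih2 => exact ih1.trans ih2

lemma pairs_perm {a : S} {s p : List S} (hs : s.head? = some a)
    {L₁ L₂ : List (List S)} (hperm : L₁.Perm L₂)
    (h1 : ∀ B ∈ L₁, B ≠ []) (h2 : ∀ B ∈ L₁, B.head? = some a) :
    (pairs (p ++ L₁.flatten ++ s)).Perm (pairs (p ++ L₂.flatten ++ s)) := by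
  have h1' : ∀ B ∈ L₂, B ≠ [] := fun B hB => h1 B (hperm.mem_iff.2 hB)
  have h2' : ∀ B ∈ L₂, B.head? = some a := fun B hB => h2 B (hperm.mem_iff.2 hB)
  have key : (pairs (L₁.flatten ++ s)).Perm (pairs (L₂.flatten ++ s)) := by
    rw [pairs_flatten_append hs h1 h2, pairs_flatten_append hs h1' h2']
    exact (flatten_perm (hperm.map _)).append_right _
  cases p with
  | nil => simpa using key
  | cons c p' =>
    have hlast : (c :: p').getLast? = some ((c :: p').getLastD a) :=
      getLast?_eq_some_getLastD (by simp) a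
    have hh1 : (L₁.flatten ++ s).head? = some a := head?_flatten_append h2 hs
    have hh2 : (L₂.flatten ++ s).head? = some a := head?_flatten_append h2' hs
    rw [List.append_assoc, List.append_assoc, pairs_append hlast hh1, pairs_append hlast hh2]
    exact (key.cons _).append_left _

end BlockPermAux

open BlockPermAux in
/-- Permuting the `a`-blocks of a sequence preserves the length, the first element, the
last element, the number of occurrences of `a`, and all transition counts.
Here `x = p ++ B₁ ++ ⋯ ++ B_{d-1} ++ s` where `a` occurs `d ≥ 2` times in `x`: the prefix
`p` contains no `a`, each block `B_k` starts with `a` and contains no further `a`, and the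
suffix `s` starts with `a` (the last occurrence) and contains no further `a`.  The
block-permuted sequence is `p ++ B_{σ(1)} ++ ⋯ ++ B_{σ(d-1)} ++ s`. -/
theorem blockPermute_preserves_transCounts
    {S : Type*} [DecidableEq S] (a : S) (d : ℕ) (hd : 2 ≤ d)
    (p s : List S) (B : Fin (d - 1) → List S)
    (hp : a ∉ p)
    (hs₁ : s ≠ []) (hs₂ : s.head? = some a) (hs₃ : a ∉ s.tail)
    (hB₁ : ∀ k, B k ≠ []) (hB₂ : ∀ k, (B k).head? = some a) (hB₃ : ∀ k, a ∉ (B k).tail)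
    (x : List S) (hx : x = p ++ (List.ofFn B).flatten ++ s)
    (σ : Equiv.Perm (Fin (d - 1))) :
    (p ++ (List.ofFn (B ∘ σ)).flatten ++ s).length = x.length ∧
      (p ++ (List.ofFn (B ∘ σ)).flatten ++ s).head? = x.head? ∧
      (p ++ (List.ofFn (B ∘ σ)).flatten ++ s).getLast? = x.getLast? ∧
      (p ++ (List.ofFn (B ∘ σ)).flatten ++ s).count a = x.count a ∧
      ∀ i j : S, transCountL (p ++ (List.ofFn (B ∘ σ)).flatten ++ s) i j = transCountL x i j := by
  subst hx
  have hLperm : (List.ofFn (B ∘ σ)).Perm (List.ofFn B) := Equiv.Perm.ofFn_comp_perm σ B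
  have hfl : ((List.ofFn (B ∘ σ)).flatten).Perm ((List.ofFn B).flatten) := flatten_perm hLperm
  refine ⟨?_, ?_, ?_, ?_, ?_⟩
  · simp [hfl.length_eq]
  · cases p with
    | cons c p' => rfl
    | nil =>
      simp only [List.nil_append]
      rw [head?_flatten_append (L := List.ofFn (B ∘ σ)) ?_ hs₂,
        head?_flatten_append (L := List.ofFn B) ?_ hs₂]
      · intro C hC; obtain ⟨k, rfl⟩ := List.mem_ofFn.1 hC; exact hB₂ k
      · intro C hC; obtain ⟨k, rfl⟩ := List.mem_ofFn.1 hC; exact hB₂ (σ k)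
  · rw [List.getLast?_append_of_ne_nil _ hs₁, List.getLast?_append_of_ne_nil _ hs₁]
  · simp [List.count_append, hfl.count_eq]
  · intro i j
    have key : (pairs (p ++ (List.ofFn (B ∘ σ)).flatten ++ s)).Perm
        (pairs (p ++ (List.ofFn B).flatten ++ s)) := by
      refine pairs_perm hs₂ hLperm ?_ ?_
      · intro C hC; obtain ⟨k, rfl⟩ := List.mem_ofFn.1 hC; exact hB₁ (σ k)
      · intro C hC; obtain ⟨k, rfl⟩ := List.mem_ofFn.1 hC; exact hB₂ (σ k)
    simp only [transCountL, List.count_eq_countP]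
    exact key.countP_eq _
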